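/- (Main theorem) For every time-series distribution ρ on {0,1}^∞ there exists a measure μ ∈ S⁺ with d(μ, ρ) ≥ 1, where S⁺ is the set of measures μ for which some stationary ergodic measure ν satisfies d(μ, ν) = 0. In particular, no predictor is universally consistent on S⁺. -/

import Mathlib

open MeasureTheory Filter
open scoped ENNReal

/-- The shift on infinite binary sequences. -/
def shift : (ℕ → Bool) → (ℕ → Bool) := fun y n => y (n + 1)

/-- Probability of the cylinder set of the finite word `w`. -/
noncomputable def cyl (μ : Measure (ℕ → Bool)) (w : List Bool) : ℝ :=
  (μ {y : ℕ → Bool | ∀ i : Fin w.length, y (i : ℕ) = w.get i}).toReal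

/-- One summand of the KL divergence between the distributions induced on
length-`n` words, with the conventions `0 · log(0/q) = 0` and
`p · log(p/0) = ∞` for `p > 0`. -/
noncomputable def klTerm (μ ρ : Measure (ℕ → Bool)) (w : List Bool) : EReal :=
  if cyl μ w = 0 then 0
  else if cyl ρ w = 0 then ⊤
  else ((cyl μ w * Real.logb 2 (cyl μ w / cyl ρ w) : ℝ) : EReal)

/-- Cumulative KL divergence `d_n(μ, ρ) = E_μ[log₂(μ(x_{1..n})/ρ(x_{1..n}))]`. -/
noncomputable def dn (μ ρ : Measure (ℕ → Bool)) (n : ℕ) : EReal :=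
  ∑ w : Fin n → Bool, klTerm μ ρ (List.ofFn w)

/-- Expected average KL divergence `d(μ, ρ) = liminf (1/n) d_n(μ, ρ)`. -/
noncomputable def dKL (μ ρ : Measure (ℕ → Bool)) : EReal :=
  liminf (fun n : ℕ => ((((n : ℝ))⁻¹ : ℝ) : EReal) * dn μ ρ n) atTop

set_option linter.unusedSectionVars false
namespace Stmt13

/-! ### Cylinder sets on the output space -/

def cylSet (w : List Bool) : Set (ℕ → Bool) :=
  {y : ℕ → Bool | ∀ i : Fin w.length, y (i : ℕ) = w.get i}

lemma cyl_def (μ : Measure (ℕ → Bool)) (w : List Bool) : cyl μ w = (μ (cylSet w)).toReal := rfl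

lemma measurableSet_cylSet (w : List Bool) : MeasurableSet (cylSet w) := by
  have : cylSet w = ⋂ i : Fin w.length, {y : ℕ → Bool | y (i : ℕ) = w.get i} := by
    ext y; simp [cylSet, Set.mem_iInter]
  rw [this]
  exact MeasurableSet.iInter fun i =>
    measurableSet_eq_fun (measurable_pi_apply (i : ℕ)) measurable_const

lemma mem_cylSet_append {w : List Bool} {b : Bool} {y : ℕ → Bool} :
    y ∈ cylSet (w ++ [b]) ↔ y ∈ cylSet w ∧ y w.length = b := by
  constructor
  · intro h
    constructor
    · intro i
      have hi : (i : ℕ) < (w ++ [b]).length := by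
        simp only [List.length_append, List.length_singleton]; omega
      have := h ⟨(i : ℕ), hi⟩
      simpa [List.get_eq_getElem, List.getElem_append_left i.2] using this
    · have hl : w.length < (w ++ [b]).length := by
        simp [List.length_append]
      have := h ⟨w.length, hl⟩
      simpa [List.get_eq_getElem] using this
  · rintro ⟨h1, h2⟩ i
    have hi : (i : ℕ) < w.length + 1 := by
      have := i.2; simpa [List.length_append] using this
    rcases Nat.lt_or_ge (i : ℕ) w.length with h | h
    · have := h1 ⟨(i : ℕ), h⟩
      simpa [List.get_eq_getElem, List.getElem_append_left h] using this
    · have hie : (i : ℕ) = w.length := by omega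
      simp only [List.get_eq_getElem]
      have : (w ++ [b])[(i : ℕ)] = b := by
        rw [List.getElem_append_right (by omega)]
        simp [hie]
      rw [this, hie, h2]

lemma cylSet_split (w : List Bool) :
    cylSet w = cylSet (w ++ [false]) ∪ cylSet (w ++ [true]) := by
  ext y
  simp only [Set.mem_union, mem_cylSet_append]
  cases h : y w.length <;> tauto

lemma cylSet_split_disjoint (w : List Bool) :
    Disjoint (cylSet (w ++ [false])) (cylSet (w ++ [true])) := by
  rw [Set.disjoint_left]
  intro y h1 h2
  have e1 := (mem_cylSet_append.mp h1).2
  have e2 := (mem_cylSet_append.mp h2).2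
  rw [e1] at e2; exact Bool.false_ne_true e2

lemma cyl_append_add (μ : Measure (ℕ → Bool)) [IsProbabilityMeasure μ] (w : List Bool) :
    cyl μ (w ++ [false]) + cyl μ (w ++ [true]) = cyl μ w := by
  simp only [cyl_def]
  rw [← ENNReal.toReal_add (measure_ne_top _ _) (measure_ne_top _ _)]
  congr 1
  rw [cylSet_split w]
  exact (measure_union (cylSet_split_disjoint w) (measurableSet_cylSet _)).symm

lemma cyl_nonneg (μ : Measure (ℕ → Bool)) (w : List Bool) : 0 ≤ cyl μ w :=
  ENNReal.toReal_nonneg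

lemma cyl_le_one (μ : Measure (ℕ → Bool)) [IsProbabilityMeasure μ] (w : List Bool) :
    cyl μ w ≤ 1 := by
  rw [cyl_def]
  have h := prob_le_one (μ := μ) (s := cylSet w)
  simpa using ENNReal.toReal_mono ENNReal.one_ne_top h

/-! ### The adversarial sequence -/

variable (ρ : Measure (ℕ → Bool)) [IsProbabilityMeasure ρ]

noncomputable def pick (w : List Bool) : Bool :=
  if cyl ρ (w ++ [true]) ≤ cyl ρ (w ++ [false]) then true else false

noncomputable def advPref : ℕ → List Bool
  | 0 => []
  | n + 1 => advPref n ++ [pick ρ (advPref n)]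

noncomputable def adv : ℕ → Bool := fun n => pick ρ (advPref ρ n)

lemma advPref_eq_ofFn (n : ℕ) : advPref ρ n = List.ofFn (fun i : Fin n => adv ρ i) := by
  induction n with
  | zero => simp [advPref]
  | succ n ih =>
    rw [show advPref ρ (n+1) = advPref ρ n ++ [pick ρ (advPref ρ n)] from rfl]
    rw [List.ofFn_succ' (fun i : Fin (n+1) => adv ρ i)]
    rw [List.concat_eq_append, ih]
    congr 1
    rw [← ih]
    rfl

lemma cyl_pick_le (w : List Bool) : cyl ρ (w ++ [pick ρ w]) ≤ cyl ρ w / 2 := by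
  have hadd := cyl_append_add ρ w
  unfold pick
  split_ifs with h
  · linarith
  · push_neg at h; linarith

lemma cyl_advPref_le (n : ℕ) : cyl ρ (advPref ρ n) ≤ (2 : ℝ)⁻¹ ^ n := by
  induction n with
  | zero => simpa [advPref] using cyl_le_one ρ []
  | succ n ih =>
    have h := cyl_pick_le ρ (advPref ρ n)
    have : cyl ρ (advPref ρ (n+1)) ≤ cyl ρ (advPref ρ n) / 2 := h
    calc cyl ρ (advPref ρ (n+1)) ≤ cyl ρ (advPref ρ n) / 2 := this
      _ ≤ (2 : ℝ)⁻¹ ^ n / 2 := by linarith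
      _ = (2 : ℝ)⁻¹ ^ (n + 1) := by ring

/-! ### Dirac measures and `dn` -/

lemma mem_cylSet_ofFn_iff {n : ℕ} {f : Fin n → Bool} {y : ℕ → Bool} :
    y ∈ cylSet (List.ofFn f) ↔ ∀ i : Fin n, y (i : ℕ) = f i := by
  constructor
  · intro h i
    have hi : (i : ℕ) < (List.ofFn f).length := by
      rw [List.length_ofFn]; exact i.2
    have := h ⟨(i : ℕ), hi⟩
    rw [List.get_ofFn] at this
    simpa using this
  · intro h i
    rw [List.get_ofFn]
    have := h (Fin.cast (List.length_ofFn (f := f)) i)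
    simpa using this

lemma cyl_dirac_self (x : ℕ → Bool) (n : ℕ) :
    cyl (Measure.dirac x) (List.ofFn fun i : Fin n => x i) = 1 := by
  rw [cyl_def, Measure.dirac_apply' _ (measurableSet_cylSet _)]
  have hx : x ∈ cylSet (List.ofFn fun i : Fin n => x i) :=
    mem_cylSet_ofFn_iff.mpr fun i => rfl
  simp [Set.indicator_of_mem hx]

lemma cyl_dirac_ne (x : ℕ → Bool) {n : ℕ} {f : Fin n → Bool}
    (h : f ≠ fun i : Fin n => x i) : cyl (Measure.dirac x) (List.ofFn f) = 0 := by
  rw [cyl_def, Measure.dirac_apply' _ (measurableSet_cylSet _)]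
  have hx : x ∉ cylSet (List.ofFn f) := by
    intro hmem
    exact h (funext fun i => ((mem_cylSet_ofFn_iff.mp hmem) i).symm)
  simp [Set.indicator_of_notMem hx]

lemma dn_dirac (x : ℕ → Bool) (ρ' : Measure (ℕ → Bool)) (n : ℕ) :
    dn (Measure.dirac x) ρ' n = klTerm (Measure.dirac x) ρ' (List.ofFn fun i : Fin n => x i) := by
  unfold dn
  apply Fintype.sum_eq_single
  intro f hf
  unfold klTerm
  rw [cyl_dirac_ne x hf]
  simp

lemma advPref_cylSet_eq (n : ℕ) :
    (List.ofFn fun i : Fin n => adv ρ i) = advPref ρ n := (advPref_eq_ofFn ρ n).symm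

/-- `d(δ_x, ρ) ≥ 1` for the adversarial `x`. -/
lemma dKL_dirac_adv_ge_one : 1 ≤ dKL (Measure.dirac (adv ρ)) ρ := by
  unfold dKL
  apply le_liminf_of_le (by isBoundedDefault)
  filter_upwards [eventually_ge_atTop 1] with n hn
  rw [dn_dirac, advPref_cylSet_eq]
  have h1 : cyl (Measure.dirac (adv ρ)) (advPref ρ n) = 1 := by
    rw [← advPref_cylSet_eq]; exact cyl_dirac_self (adv ρ) n
  unfold klTerm
  rw [h1]
  have hinvpos : (0 : ℝ) < (n : ℝ)⁻¹ := by
    have : (0:ℝ) < (n:ℝ) := by exact_mod_cast hn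
    positivity
  split_ifs with h0 hρ0
  · norm_num at h0
  · -- term is ⊤
    rw [EReal.mul_top_of_pos]
    · exact le_top
    · exact_mod_cast EReal.coe_pos.mpr hinvpos
  · -- real branch
    have hcle := cyl_advPref_le ρ n
    have hcpos : 0 < cyl ρ (advPref ρ n) :=
      lt_of_le_of_ne (cyl_nonneg ρ _) (Ne.symm hρ0)
    have hlogb : (n : ℝ) ≤ Real.logb 2 (1 / cyl ρ (advPref ρ n)) := by
      have h2n : (2:ℝ)^n ≤ 1 / cyl ρ (advPref ρ n) := by
        rw [le_one_div (by positivity) hcpos]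
        calc cyl ρ (advPref ρ n) ≤ (2:ℝ)⁻¹ ^ n := hcle
          _ = 1 / (2:ℝ)^n := by rw [inv_pow, one_div]
      calc (n : ℝ) = Real.logb 2 ((2:ℝ)^n) := by
            rw [Real.logb_pow]; simp [Real.logb_self_eq_one]
        _ ≤ Real.logb 2 (1 / cyl ρ (advPref ρ n)) := by
            rw [Real.logb_le_logb (by norm_num) (by positivity) (by positivity)]
            exact h2n
    have : (1 : ℝ) ≤ (n:ℝ)⁻¹ * (1 * Real.logb 2 (1 / cyl ρ (advPref ρ n))) := by
      rw [one_mul]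
      have hn1 : (1:ℝ) ≤ (n:ℝ) := by exact_mod_cast hn
      calc (1:ℝ) = (n:ℝ)⁻¹ * (n:ℝ) := by field_simp
        _ ≤ (n:ℝ)⁻¹ * Real.logb 2 (1 / cyl ρ (advPref ρ n)) := by
            apply mul_le_mul_of_nonneg_left hlogb (le_of_lt hinvpos)
    calc (1 : EReal) = ((1:ℝ) : EReal) := by norm_num
      _ ≤ (((n:ℝ)⁻¹ * (1 * Real.logb 2 (1 / cyl ρ (advPref ρ n))) : ℝ) : EReal) :=
          EReal.coe_le_coe_iff.mpr this
      _ = (((n:ℝ)⁻¹ : ℝ) : EReal) * ((1 * Real.logb 2 (1 / cyl ρ (advPref ρ n)) : ℝ) : EReal) :=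
          EReal.coe_mul _ _



open ProbabilityTheory

/-! ### The base space: Haar (fair-coin) measure on `ℕ → ZMod 2` -/

abbrev Om : Type := ℕ → ZMod 2

noncomputable def Bm : Measure Om :=
  Measure.addHaarMeasure ⟨⟨Set.univ, isCompact_univ⟩, by simp⟩

instance : Bm.IsAddLeftInvariant := by
  unfold Bm; infer_instance

instance : IsProbabilityMeasure Bm := by
  constructor
  have := Measure.addHaarMeasure_self
    (K₀ := (⟨⟨Set.univ, isCompact_univ⟩, by simp⟩ : TopologicalSpace.PositiveCompacts Om))
  simpa [Bm] using this

/-- Finite "pattern" cylinder sets in the base space. -/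
def pat (T : Finset ℕ) (a : ℕ → ZMod 2) : Set Om := {ω : Om | ∀ i ∈ T, ω i = a i}

lemma measurableSet_pat (T : Finset ℕ) (a : ℕ → ZMod 2) : MeasurableSet (pat T a) := by
  have : pat T a = ⋂ i ∈ T, {ω : Om | ω i = a i} := by
    ext ω; simp [pat]
  rw [this]
  exact MeasurableSet.biInter T.countable_toSet fun i _ =>
    measurableSet_eq_fun (measurable_pi_apply i) measurable_const

lemma pat_univ (a : ℕ → ZMod 2) : pat ∅ a = Set.univ := by
  ext ω; simp [pat]

lemma zmod2_cases : ∀ c d : ZMod 2, c = d ∨ c = d + 1 := by decide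

lemma zmod2_ne_add_one : ∀ d : ZMod 2, d ≠ d + 1 := by decide

lemma pat_prob (T : Finset ℕ) (a : ℕ → ZMod 2) :
    Bm (pat T a) = (2 : ℝ≥0∞)⁻¹ ^ T.card := by
  induction T using Finset.induction generalizing a with
  | empty => simp [pat_univ]
  | @insert j T hj ih =>
    -- translation by the `j`-indicator
    set g : Om := fun i => if i = j then 1 else 0 with hg
    have htrans : ∀ b : ℕ → ZMod 2, Bm (pat (insert j T) fun i => b i - g i)
        = Bm (pat (insert j T) b) := by
      intro b
      have hpre : (fun ω : Om => g + ω) ⁻¹' (pat (insert j T) b)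
          = pat (insert j T) (fun i => b i - g i) := by
        ext ω
        simp only [pat, Set.mem_preimage, Set.mem_setOf_eq, Pi.add_apply]
        constructor
        · intro h i hi; rw [← h i hi]; ring
        · intro h i hi; rw [h i hi]; ring
      rw [← hpre, measure_preimage_add]
    have h2 : Bm (pat (insert j T) fun i => a i + g i) = Bm (pat (insert j T) a) := by
      have := htrans (fun i => a i + g i)
      have hsimp : (fun i => (a i + g i) - g i) = a := by funext i; ring
      rw [hsimp] at this
      exact this.symm
    have hunion : pat T a = pat (insert j T) a ∪ pat (insert j T) (fun i => a i + g i) := by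
      ext ω
      simp only [pat, Set.mem_union, Set.mem_setOf_eq]
      constructor
      · intro h
        rcases zmod2_cases (ω j) (a j) with hc | hc
        · left; intro i hi
          rcases Finset.mem_insert.mp hi with rfl | hi'
          · exact hc
          · exact h i hi'
        · right; intro i hi
          rcases Finset.mem_insert.mp hi with rfl | hi'
          · simpa [hg] using hc
          · have hij : i ≠ j := fun hij => hj (hij ▸ hi')
            simp only [hg, if_neg hij, add_zero]
            exact h i hi'
      · intro h i hi
        rcases h with h | h
        · exact h i (Finset.mem_insert_of_mem hi)
        · have hij : i ≠ j := fun hij => hj (hij ▸ hi)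
          have := h i (Finset.mem_insert_of_mem hi)
          simpa [hg, if_neg hij] using this
    have hdisj : Disjoint (pat (insert j T) a) (pat (insert j T) (fun i => a i + g i)) := by
      rw [Set.disjoint_left]
      intro ω h1 h2'
      have e1 := h1 j (Finset.mem_insert_self j T)
      have e2 := h2' j (Finset.mem_insert_self j T)
      rw [e1] at e2
      simp only [hg, if_pos rfl] at e2
      exact zmod2_ne_add_one (a j) e2
    have hsum : Bm (pat T a) = 2 * Bm (pat (insert j T) a) := by
      rw [hunion, measure_union hdisj (measurableSet_pat _ _), h2, two_mul]
    have hcard : (insert j T).card = T.card + 1 := Finset.card_insert_of_notMem hj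
    rw [hcard, pow_succ]
    have : Bm (pat (insert j T) a) = 2⁻¹ * (2 * Bm (pat (insert j T) a)) := by
      rw [← mul_assoc, ENNReal.inv_mul_cancel two_ne_zero ENNReal.ofNat_ne_top, one_mul]
    rw [this, ← hsum, ih a, mul_comm]

/-! ### Pattern gluing, the pi-system, invariance, independence -/

lemma pat_inter_of_disjoint {T T' : Finset ℕ} (h : Disjoint T T') (a a' : ℕ → ZMod 2) :
    pat T a ∩ pat T' a' = pat (T ∪ T') (fun i => if i ∈ T then a i else a' i) := by
  ext ω
  simp only [pat, Set.mem_inter_iff, Set.mem_setOf_eq]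
  constructor
  · rintro ⟨h1, h2⟩ i hi
    rcases Finset.mem_union.mp hi with hi' | hi'
    · rw [if_pos hi']; exact h1 i hi'
    · have : i ∉ T := Finset.disjoint_right.mp h hi'
      rw [if_neg this]; exact h2 i hi'
  · intro hh
    constructor
    · intro i hi
      have := hh i (Finset.mem_union_left _ hi)
      rwa [if_pos hi] at this
    · intro i hi
      have hnt : i ∉ T := Finset.disjoint_right.mp h hi
      have := hh i (Finset.mem_union_right _ hi)
      rwa [if_neg hnt] at this

def patSys : Set (Set Om) := {s | ∃ T a, s = pat T a}

lemma isPiSystem_patSys : IsPiSystem patSys := by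
  rintro s ⟨T, a, rfl⟩ t ⟨T', a', rfl⟩ hne
  obtain ⟨ω, hω1, hω2⟩ := hne
  refine ⟨T ∪ T', fun i => if i ∈ T then a i else a' i, ?_⟩
  ext y
  simp only [pat, Set.mem_inter_iff, Set.mem_setOf_eq]
  constructor
  · rintro ⟨h1, h2⟩ i hi
    rcases Finset.mem_union.mp hi with hi' | hi'
    · rw [if_pos hi']; exact h1 i hi'
    · by_cases ht : i ∈ T
      · rw [if_pos ht]; exact h1 i ht
      · rw [if_neg ht]; exact h2 i hi'
  · intro hh
    constructor
    · intro i hi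
      have := hh i (Finset.mem_union_left _ hi)
      rwa [if_pos hi] at this
    · intro i hi
      by_cases ht : i ∈ T
      · have := hh i (Finset.mem_union_left _ ht)
        rw [if_pos ht] at this
        rw [this, ← hω1 i ht, hω2 i hi]
      · have := hh i (Finset.mem_union_right _ hi)
        rwa [if_neg ht] at this

lemma generateFrom_patSys : MeasurableSpace.generateFrom patSys = MeasurableSpace.pi := by
  apply le_antisymm
  · apply MeasurableSpace.generateFrom_le
    rintro s ⟨T, a, rfl⟩
    exact measurableSet_pat T a
  · rw [show (MeasurableSpace.pi : MeasurableSpace Om)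
        = ⨆ i, MeasurableSpace.comap (fun ω : Om => ω i) inferInstance from rfl]
    apply iSup_le
    intro i
    intro s hs
    obtain ⟨S, -, rfl⟩ := hs
    have hdecomp : (fun ω : Om => ω i) ⁻¹' S = ⋃ c ∈ S, pat {i} (fun _ => c) := by
      ext ω; simp [pat]
    rw [hdecomp]
    exact MeasurableSet.biUnion (Set.to_countable S) fun c _ =>
      MeasurableSpace.measurableSet_generateFrom ⟨{i}, fun _ => c, rfl⟩

/-! ### The block shift on the base space -/

def tau (j : ℕ) : ℕ := Nat.pair ((Nat.unpair j).1 + 1) (Nat.unpair j).2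

lemma tau_inj : Function.Injective tau := by
  intro j j' h
  unfold tau at h
  rw [Nat.pair_eq_pair] at h
  have h1 : (Nat.unpair j).1 = (Nat.unpair j').1 := by omega
  have h2 : (Nat.unpair j).2 = (Nat.unpair j').2 := h.2
  calc j = Nat.pair (Nat.unpair j).1 (Nat.unpair j).2 := (Nat.pair_unpair j).symm
    _ = Nat.pair (Nat.unpair j').1 (Nat.unpair j').2 := by rw [h1, h2]
    _ = j' := Nat.pair_unpair j'

def shiftOm (ω : Om) : Om := fun m => ω (tau m)

lemma measurable_shiftOm : Measurable shiftOm :=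
  measurable_pi_iff.mpr fun m => measurable_pi_apply _

lemma shiftOm_preimage_pat (T : Finset ℕ) (a : ℕ → ZMod 2) :
    shiftOm ⁻¹' pat T a
      = pat (T.image tau) (fun j => a (Nat.pair ((Nat.unpair j).1 - 1) (Nat.unpair j).2)) := by
  ext ω
  simp only [pat, Set.mem_preimage, Set.mem_setOf_eq, shiftOm, Finset.mem_image]
  constructor
  · rintro h j ⟨i, hi, rfl⟩
    rw [show Nat.pair ((Nat.unpair (tau i)).1 - 1) (Nat.unpair (tau i)).2 = i by
      unfold tau; rw [Nat.unpair_pair]; simp [Nat.pair_unpair]]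
    exact h i hi
  · intro h i hi
    have := h (tau i) ⟨i, hi, rfl⟩
    rwa [show Nat.pair ((Nat.unpair (tau i)).1 - 1) (Nat.unpair (tau i)).2 = i by
      unfold tau; rw [Nat.unpair_pair]; simp [Nat.pair_unpair]] at this

lemma map_shiftOm_Bm : Measure.map shiftOm Bm = Bm := by
  have hprob : IsProbabilityMeasure (Measure.map shiftOm Bm) :=
    Measure.isProbabilityMeasure_map measurable_shiftOm.aemeasurable
  apply ext_of_generate_finite patSys generateFrom_patSys.symm isPiSystem_patSys
  · rintro s ⟨T, a, rfl⟩
    rw [Measure.map_apply measurable_shiftOm (measurableSet_pat T a)]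
    rw [shiftOm_preimage_pat, pat_prob, pat_prob, Finset.card_image_of_injective _ tau_inj]
  · rw [Measure.map_apply measurable_shiftOm MeasurableSet.univ]
    simp

/-! ### Block σ-algebras and independence -/

def blockSys (u : ℕ) : Set (Set Om) :=
  {s | ∃ T a, (∀ j ∈ T, (Nat.unpair j).1 = u) ∧ s = pat T a}

def blockM (u : ℕ) : MeasurableSpace Om := .generateFrom (blockSys u)

lemma blockM_le (u : ℕ) : blockM u ≤ (inferInstance : MeasurableSpace Om) := by
  apply MeasurableSpace.generateFrom_le
  rintro s ⟨T, a, _, rfl⟩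
  exact measurableSet_pat T a

lemma isPiSystem_blockSys (u : ℕ) : IsPiSystem (blockSys u) := by
  rintro s ⟨T, a, hT, rfl⟩ t ⟨T', a', hT', rfl⟩ hne
  obtain ⟨T'', a'', h''⟩ := isPiSystem_patSys (pat T a) ⟨T, a, rfl⟩ (pat T' a') ⟨T', a', rfl⟩ hne
  -- reprove with support tracking
  refine ⟨T ∪ T', fun i => if i ∈ T then a i else a' i, ?_, ?_⟩
  · intro j hj
    rcases Finset.mem_union.mp hj with h | h
    · exact hT j h
    · exact hT' j h
  · obtain ⟨ω, hω1, hω2⟩ := hne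
    ext y
    simp only [pat, Set.mem_inter_iff, Set.mem_setOf_eq]
    constructor
    · rintro ⟨h1, h2⟩ i hi
      rcases Finset.mem_union.mp hi with hi' | hi'
      · rw [if_pos hi']; exact h1 i hi'
      · by_cases ht : i ∈ T
        · rw [if_pos ht]; exact h1 i ht
        · rw [if_neg ht]; exact h2 i hi'
    · intro hh
      constructor
      · intro i hi
        have := hh i (Finset.mem_union_left _ hi)
        rwa [if_pos hi] at this
      · intro i hi
        by_cases ht : i ∈ T
        · have := hh i (Finset.mem_union_left _ ht)
          rw [if_pos ht] at this
          rw [this, ← hω1 i ht, hω2 i hi]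
        · have := hh i (Finset.mem_union_right _ hi)
          rwa [if_neg ht] at this

lemma biInter_blockSys (J : Finset ℕ) (f : ℕ → Set Om) (hf : ∀ u ∈ J, f u ∈ blockSys u) :
    ∃ T a, (∀ j ∈ T, (Nat.unpair j).1 ∈ J) ∧ ((⋂ u ∈ J, f u) = pat T a)
      ∧ Bm (⋂ u ∈ J, f u) = ∏ u ∈ J, Bm (f u) := by
  induction J using Finset.induction with
  | empty =>
    refine ⟨∅, fun _ => 0, by simp, by simp [pat_univ], by simp⟩
  | @insert j J hj ih =>
    obtain ⟨T', a', hsupp', heq', hprod'⟩ := ih fun u hu => hf u (Finset.mem_insert_of_mem hu)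
    obtain ⟨Tj, aj, hsuppj, heqj⟩ := hf j (Finset.mem_insert_self j J)
    have hdisj : Disjoint Tj T' := by
      rw [Finset.disjoint_left]
      intro k hk hk'
      have h1 := hsuppj k hk
      have h2 := hsupp' k hk'
      rw [h1] at h2
      exact hj h2
    have hint : (⋂ u ∈ insert j J, f u) = pat Tj aj ∩ pat T' a' := by
      rw [Finset.set_biInter_insert, heqj, heq']
    refine ⟨Tj ∪ T', fun i => if i ∈ Tj then aj i else a' i, ?_, ?_, ?_⟩
    · intro k hk
      rcases Finset.mem_union.mp hk with h | h
      · rw [hsuppj k h]; exact Finset.mem_insert_self j J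
      · exact Finset.mem_insert_of_mem (hsupp' k h)
    · rw [hint, pat_inter_of_disjoint hdisj]
    · rw [hint, pat_inter_of_disjoint hdisj, pat_prob,
        Finset.card_union_of_disjoint hdisj, pow_add,
        Finset.prod_insert hj, ← pat_prob Tj aj, ← heqj, ← hprod', heq', pat_prob]

lemma iIndepSets_blockSys : iIndepSets blockSys Bm := by
  rw [iIndepSets_iff]
  intro J f hf
  obtain ⟨_, _, _, _, h⟩ := biInter_blockSys J f hf
  exact h

lemma iIndep_blockM : iIndep blockM Bm :=
  iIndepSets.iIndep (m := blockM) blockM_le blockSys isPiSystem_blockSys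
    (fun _ => rfl) iIndepSets_blockSys

/-! ### Strictly invariant sets are trivial (Kolmogorov 0-1) -/

lemma shiftOm_iterate_apply (N : ℕ) (ω : Om) (j : ℕ) :
    shiftOm^[N] ω j = ω (Nat.pair ((Nat.unpair j).1 + N) (Nat.unpair j).2) := by
  induction N generalizing ω j with
  | zero => simp [Nat.pair_unpair]
  | succ N ihN =>
    rw [Function.iterate_succ_apply, ihN]
    show ω (tau _) = _
    unfold tau
    rw [Nat.unpair_pair]
    simp only []
    rw [Nat.add_assoc]

lemma tail_zero_one {A : Set Om} (hA : MeasurableSet A) (hinv : shiftOm ⁻¹' A = A) :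
    Bm A = 0 ∨ Bm A = 1 := by
  apply measure_zero_or_one_of_measurableSet_limsup_atTop blockM_le iIndep_blockM
  rw [Filter.limsup_eq]
  apply MeasurableSpace.measurableSet_sInf.mpr
  rintro m' hm'
  simp only [Set.mem_setOf_eq, eventually_atTop] at hm'
  obtain ⟨N, hN⟩ := hm'
  have hAN : ∀ M, A = (shiftOm^[M]) ⁻¹' A := by
    intro M
    induction M with
    | zero => simp
    | succ M ihM =>
      rw [Function.iterate_succ, Set.preimage_comp, ← ihM, hinv]
  have hmeas : @Measurable Om Om m' MeasurableSpace.pi (shiftOm^[N]) := by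
    apply measurable_pi_lambda
    intro j
    have hrw : (fun ω : Om => shiftOm^[N] ω j)
        = fun ω : Om => ω (Nat.pair ((Nat.unpair j).1 + N) (Nat.unpair j).2) := by
      funext ω; exact shiftOm_iterate_apply N ω j
    rw [hrw]
    apply measurable_to_countable'
    intro c
    have hpat : (fun ω : Om => ω (Nat.pair ((Nat.unpair j).1 + N) (Nat.unpair j).2)) ⁻¹' {c}
        = pat {Nat.pair ((Nat.unpair j).1 + N) (Nat.unpair j).2} (fun _ => c) := by
      ext ω; simp [pat]
    rw [hpat]
    have hblock : pat {Nat.pair ((Nat.unpair j).1 + N) (Nat.unpair j).2} (fun _ => c)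
        ∈ blockSys ((Nat.unpair j).1 + N) := by
      refine ⟨_, fun _ => c, ?_, rfl⟩
      intro k hk
      simp only [Finset.mem_singleton] at hk
      rw [hk, Nat.unpair_pair]
    exact hN _ (Nat.le_add_left N _) _
      (MeasurableSpace.measurableSet_generateFrom hblock)
  rw [hAN N]
  exact hmeas hA

/-! ### The replay process -/

def bitf (u i : ℕ) (ω : Om) : ZMod 2 := ω (Nat.pair u i)

def quadBad (u g : ℕ) (ω : Om) : Prop := ∃ i < 4, bitf u (4*g+i) ω ≠ 1

noncomputable def Gf (u : ℕ) (ω : Om) : ℕ := sInf {g | quadBad u g ω}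

noncomputable def valf (u : ℕ) (ω : Om) : ℕ :=
  ∑ i ∈ Finset.range (Gf u ω), if bitf u (4*(Gf u ω + 1) + i) ω = 1 then 2^i else 0

noncomputable def Kf (u : ℕ) (ω : Om) : ℕ := 2 ^ Gf u ω + valf u ω

def renewalAt (t : ℕ) (ω : Om) : Prop := ∀ u, t < u → Kf u ω + t ≤ u

noncomputable def rf (ω : Om) : ℕ := sInf {t | renewalAt t ω}

def psix (x : ℕ → Bool) (j κ : ℕ) : Bool := if j = 0 then x 0 else x (κ - j)

noncomputable def Ff (x : ℕ → Bool) (ω : Om) : Bool := psix x (rf ω) (Kf (rf ω) ω)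

noncomputable def Phi (x : ℕ → Bool) (ω : Om) : ℕ → Bool := fun t => Ff x (shiftOm^[t] ω)

lemma Phi_shiftOm (x : ℕ → Bool) (ω : Om) : Phi x (shiftOm ω) = shift (Phi x ω) := by
  funext t
  show Ff x (shiftOm^[t] (shiftOm ω)) = Ff x (shiftOm^[t+1] ω)
  rw [Function.iterate_succ_apply]

/-! ### Shift lemmas for the decoders -/

lemma bitf_shiftOm (u i : ℕ) (ω : Om) : bitf u i (shiftOm ω) = bitf (u+1) i ω := by
  show ω (tau (Nat.pair u i)) = _
  unfold tau bitf
  rw [Nat.unpair_pair]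

lemma Gf_shiftOm (u : ℕ) (ω : Om) : Gf u (shiftOm ω) = Gf (u+1) ω := by
  unfold Gf
  congr 1
  ext g
  simp only [Set.mem_setOf_eq, quadBad, bitf_shiftOm]

lemma valf_shiftOm (u : ℕ) (ω : Om) : valf u (shiftOm ω) = valf (u+1) ω := by
  unfold valf
  rw [Gf_shiftOm]
  exact Finset.sum_congr rfl fun i _ => by rw [bitf_shiftOm]

lemma Kf_shiftOm (u : ℕ) (ω : Om) : Kf u (shiftOm ω) = Kf (u+1) ω := by
  unfold Kf; rw [Gf_shiftOm, valf_shiftOm]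

lemma Kf_iterate (u t : ℕ) (ω : Om) : Kf u (shiftOm^[t] ω) = Kf (u+t) ω := by
  induction t generalizing u ω with
  | zero => rfl
  | succ t ih =>
    rw [Function.iterate_succ_apply, ih, Kf_shiftOm, ← Nat.add_assoc]

lemma renewalAt_iterate (s t : ℕ) (ω : Om) :
    renewalAt s (shiftOm^[t] ω) ↔ renewalAt (s+t) ω := by
  unfold renewalAt
  constructor
  · intro h v hv
    have h1 : s < v - t := by omega
    have := h (v - t) h1
    rw [Kf_iterate] at this
    have hvt : v - t + t = v := by omega
    rw [hvt] at this
    omega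
  · intro h u hu
    have := h (u + t) (by omega)
    rw [Kf_iterate]
    omega

/-! ### Arithmetic helper lemmas -/

lemma natSInf_eq {S : Set ℕ} {g : ℕ} (hg : g ∈ S) (h : ∀ s, s < g → s ∉ S) : sInf S = g := by
  have h1 : sInf S ≤ g := Nat.sInf_le hg
  rcases Nat.lt_or_ge (sInf S) g with hlt | hge
  · exact absurd (Nat.sInf_mem ⟨g, hg⟩) (h _ hlt)
  · omega

lemma sum_range_two_pow (g : ℕ) : ∑ i ∈ Finset.range g, 2^i = 2^g - 1 := by
  induction g with
  | zero => simp
  | succ g ih =>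
    rw [Finset.sum_range_succ, ih]
    have h1 : 1 ≤ 2^g := Nat.one_le_two_pow
    have h2 : (2:ℕ)^(g+1) = 2^g + 2^g := by rw [pow_succ]; ring
    omega

lemma valf_le (u : ℕ) (ω : Om) : valf u ω ≤ 2 ^ Gf u ω - 1 := by
  unfold valf
  calc ∑ i ∈ Finset.range (Gf u ω), (if bitf u (4*(Gf u ω + 1) + i) ω = 1 then 2^i else 0)
      ≤ ∑ i ∈ Finset.range (Gf u ω), 2^i := by
        apply Finset.sum_le_sum
        intro i _
        split_ifs <;> simp
    _ = 2 ^ Gf u ω - 1 := sum_range_two_pow _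

lemma Kf_le (u : ℕ) (ω : Om) : Kf u ω ≤ 2 ^ (Gf u ω + 1) - 1 := by
  have h1 := valf_le u ω
  have h2 : 1 ≤ 2 ^ Gf u ω := Nat.one_le_two_pow
  have h3 : (2:ℕ) ^ (Gf u ω + 1) = 2 ^ Gf u ω + 2 ^ Gf u ω := by rw [pow_succ]; ring
  unfold Kf
  omega

lemma sum_testBit (g : ℕ) : ∀ v : ℕ, v < 2^g →
    (∑ i ∈ Finset.range g, if v.testBit i = true then 2^i else 0) = v := by
  induction g with
  | zero =>
    intro v hv
    have hv0 : v = 0 := by omega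
    subst hv0; simp
  | succ g ih =>
    intro v hv
    rw [Finset.sum_range_succ']
    have hstep : ∀ i : ℕ, (if v.testBit (i+1) = true then 2^(i+1) else 0)
        = 2 * (if (v/2).testBit i = true then 2^i else 0) := by
      intro i
      rw [Nat.testBit_add_one]
      split_ifs <;> ring
    rw [Finset.sum_congr rfl fun i _ => hstep i, ← Finset.mul_sum]
    have hdiv : v / 2 < 2 ^ g := by
      have : (2:ℕ)^(g+1) = 2 * 2^g := by rw [pow_succ]; ring
      omega
    rw [ih (v/2) hdiv]
    have h0 : (if v.testBit 0 = true then 2^0 else 0) = v % 2 := by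
      rw [Nat.testBit_zero]
      rcases Nat.mod_two_eq_zero_or_one v with h | h <;> simp [h]
    rw [h0]
    omega

/-! ### The core pattern event -/

def badT (u l : ℕ) : Finset ℕ := (Finset.range (4*l)).image (Nat.pair u)

def badPat (u l : ℕ) : Set Om := pat (badT u l) (fun _ => 1)

lemma pair_left_injective (u : ℕ) : Function.Injective (Nat.pair u) := by
  intro i j h
  have := Nat.pair_eq_pair.mp h
  exact this.2

lemma badPat_prob (u l : ℕ) : Bm (badPat u l) = (2:ℝ≥0∞)⁻¹ ^ (4*l) := by
  unfold badPat badT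
  rw [pat_prob, Finset.card_image_of_injective _ (pair_left_injective u), Finset.card_range]

lemma Gf_lt_of_not_badPat {u l : ℕ} {ω : Om} (h : ω ∉ badPat u l) : Gf u ω < l := by
  unfold badPat pat at h
  simp only [Set.mem_setOf_eq, not_forall] at h
  obtain ⟨k, hk, hne⟩ := h
  unfold badT at hk
  simp only [Finset.mem_image, Finset.mem_range] at hk
  obtain ⟨i, hi, rfl⟩ := hk
  have hquad : quadBad u (i/4) ω := by
    refine ⟨i % 4, Nat.mod_lt _ (by norm_num), ?_⟩
    rw [show 4 * (i/4) + i % 4 = i from Nat.div_add_mod i 4]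
    exact hne
  have hle : Gf u ω ≤ i / 4 := Nat.sInf_le hquad
  omega

lemma Kf_le_of_not_badPat {u l : ℕ} {ω : Om} (h : ω ∉ badPat u l) : Kf u ω ≤ 2^l - 1 := by
  have h1 := Kf_le u ω
  have h2 := Gf_lt_of_not_badPat h
  have h3 : (2:ℕ) ^ (Gf u ω + 1) ≤ 2 ^ l := Nat.pow_le_pow_right (by norm_num) (by omega)
  omega

def quadT (n : ℕ) : Finset ℕ := (Finset.range (4 * Nat.log 2 n + 4)).image (Nat.pair n)

def valT (n : ℕ) : Finset ℕ :=
  (Finset.range (Nat.log 2 n)).image (fun i => Nat.pair n (4 * (Nat.log 2 n + 1) + i))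

def DT (n : ℕ) : Finset ℕ := quadT n ∪ valT n

noncomputable def Da (n : ℕ) : ℕ → ZMod 2 := fun m =>
  if (Nat.unpair m).2 < 4 * Nat.log 2 n then 1
  else if (Nat.unpair m).2 < 4 * Nat.log 2 n + 4 then 0
  else if (n - 2 ^ Nat.log 2 n).testBit ((Nat.unpair m).2 - 4 * (Nat.log 2 n + 1)) = true
    then 1 else 0

def Dpat (n : ℕ) : Set Om := pat (DT n) (Da n)

lemma Da_pair (n j : ℕ) : Da n (Nat.pair n j)
    = (if j < 4 * Nat.log 2 n then 1
      else if j < 4 * Nat.log 2 n + 4 then 0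
      else if (n - 2 ^ Nat.log 2 n).testBit (j - 4 * (Nat.log 2 n + 1)) = true then 1 else 0) := by
  unfold Da
  rw [Nat.unpair_pair]

lemma Dpat_prob (n : ℕ) : Bm (Dpat n) = (2:ℝ≥0∞)⁻¹ ^ (5 * Nat.log 2 n + 4) := by
  unfold Dpat DT
  have hdisj : Disjoint (quadT n) (valT n) := by
    rw [Finset.disjoint_left]
    rintro k hk hk'
    unfold quadT at hk
    unfold valT at hk'
    simp only [Finset.mem_image, Finset.mem_range] at hk hk'
    obtain ⟨i, hi, rfl⟩ := hk
    obtain ⟨i', hi', he⟩ := hk'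
    have := (Nat.pair_eq_pair.mp he).2
    omega
  rw [pat_prob, Finset.card_union_of_disjoint hdisj]
  unfold quadT valT
  rw [Finset.card_image_of_injective _ (pair_left_injective n), Finset.card_range]
  rw [Finset.card_image_of_injective _ (fun i j h => by
    have := (Nat.pair_eq_pair.mp h).2; omega), Finset.card_range]
  congr 1
  omega

lemma Dpat_bits {n : ℕ} {ω : Om} (hω : ω ∈ Dpat n) :
    (∀ i, i < 4 * Nat.log 2 n → bitf n i ω = 1)
    ∧ (∀ i, 4 * Nat.log 2 n ≤ i → i < 4 * Nat.log 2 n + 4 → bitf n i ω = 0)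
    ∧ (∀ i, i < Nat.log 2 n → bitf n (4 * (Nat.log 2 n + 1) + i) ω
        = if (n - 2 ^ Nat.log 2 n).testBit i = true then 1 else 0) := by
  unfold Dpat pat at hω
  simp only [Set.mem_setOf_eq] at hω
  refine ⟨?_, ?_, ?_⟩
  · intro i hi
    have hmem : Nat.pair n i ∈ DT n := by
      unfold DT quadT
      apply Finset.mem_union_left
      exact Finset.mem_image_of_mem _ (Finset.mem_range.mpr (by omega))
    have := hω _ hmem
    unfold bitf
    rw [this, Da_pair, if_pos hi]
  · intro i h1 h2
    have hmem : Nat.pair n i ∈ DT n := by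
      unfold DT quadT
      apply Finset.mem_union_left
      exact Finset.mem_image_of_mem _ (Finset.mem_range.mpr (by omega))
    have := hω _ hmem
    unfold bitf
    rw [this, Da_pair, if_neg (by omega), if_pos h2]
  · intro i hi
    have hmem : Nat.pair n (4 * (Nat.log 2 n + 1) + i) ∈ DT n := by
      unfold DT valT
      apply Finset.mem_union_right
      exact Finset.mem_image_of_mem _ (Finset.mem_range.mpr hi)
    have := hω _ hmem
    unfold bitf
    rw [this, Da_pair, if_neg (by omega), if_neg (by omega),
      show 4 * (Nat.log 2 n + 1) + i - 4 * (Nat.log 2 n + 1) = i by omega]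

lemma zmod2_zero_ne_one : (0 : ZMod 2) ≠ 1 := by decide

lemma Kf_of_Dpat {n : ℕ} {ω : Om} (hn : 1 ≤ n) (hω : ω ∈ Dpat n) : Kf n ω = n := by
  obtain ⟨hb1, hb2, hb3⟩ := Dpat_bits hω
  set g := Nat.log 2 n with hg
  have hGf : Gf n ω = g := by
    apply natSInf_eq
    · refine ⟨0, by norm_num, ?_⟩
      rw [hb2 (4*g+0) (by omega) (by omega)]
      exact zmod2_zero_ne_one
    · intro s hs hquad
      obtain ⟨i, hi4, hne⟩ := hquad
      exact hne (hb1 _ (by omega))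
  have hpow : 2 ^ g ≤ n := Nat.pow_log_le_self 2 (by omega)
  have hpow2 : n < 2 ^ (g + 1) := Nat.lt_pow_succ_log_self (by norm_num) n
  have hval : valf n ω = n - 2 ^ g := by
    unfold valf
    rw [hGf]
    have : ∀ i ∈ Finset.range g,
        (if bitf n (4*(g+1)+i) ω = 1 then 2^i else 0)
          = (if (n - 2^g).testBit i = true then 2^i else 0) := by
      intro i hi
      rw [hb3 i (Finset.mem_range.mp hi)]
      by_cases htb : (n - 2^g).testBit i = true
      · simp [htb]
      · simp [htb, zmod2_zero_ne_one]
    rw [Finset.sum_congr rfl this]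
    apply sum_testBit
    have h2g : (2:ℕ)^(g+1) = 2^g + 2^g := by rw [pow_succ]; ring
    omega
  unfold Kf
  rw [hGf, hval]
  omega

/-! ### The good event and correctness of the replay -/

def LB (n m : ℕ) : Set Om := if m + 1 < n then badPat (m+1) (Nat.log 2 (m+2)) else ∅

def RB (n m : ℕ) : Set Om := badPat (n+m+1) (Nat.log 2 (m+2))

def Good (n : ℕ) : Set Om := Dpat n \ ((⋃ m, LB n m) ∪ (⋃ m, RB n m))

lemma good_K {n : ℕ} {ω : Om} (hn : 1 ≤ n) (hω : ω ∈ Good n) :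
    Kf n ω = n ∧ (∀ u, 1 ≤ u → u < n → Kf u ω ≤ u) ∧ (∀ u, n < u → Kf u ω + n ≤ u) := by
  obtain ⟨hD, hbad⟩ := hω
  simp only [Set.mem_union, Set.mem_iUnion, not_or, not_exists] at hbad
  obtain ⟨hLB, hRB⟩ := hbad
  refine ⟨Kf_of_Dpat hn hD, ?_, ?_⟩
  · intro u h1 h2
    have h := hLB (u - 1)
    rw [LB, if_pos (by omega)] at h
    have hk := Kf_le_of_not_badPat (by rw [show u - 1 + 1 = u by omega] at h; exact h)
    have hp : 2 ^ Nat.log 2 (u - 1 + 2) ≤ u - 1 + 2 := Nat.pow_log_le_self 2 (by omega)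
    rw [show u - 1 + 2 = u + 1 by omega] at hk hp
    omega
  · intro u hu
    have h := hRB (u - n - 1)
    rw [RB, show n + (u - n - 1) + 1 = u by omega] at h
    have hk := Kf_le_of_not_badPat h
    have hp : 2 ^ Nat.log 2 (u - n - 1 + 2) ≤ u - n - 1 + 2 := Nat.pow_log_le_self 2 (by omega)
    omega

lemma phi_eq_on_good (x : ℕ → Bool) {n : ℕ} {ω : Om} (hn : 1 ≤ n) (hω : ω ∈ Good n) :
    ∀ t, t < n → Phi x ω t = x t := by
  obtain ⟨hK, hL, hR⟩ := good_K hn hω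
  have hren0 : renewalAt 0 ω := by
    intro u hu
    rcases Nat.lt_trichotomy u n with h | h | h
    · have := hL u (by omega) h; omega
    · subst h; omega
    · have := hR u h; omega
  have hrenn : renewalAt n ω := fun u hu => hR u hu
  have hnotren : ∀ t, 1 ≤ t → t < n → ¬ renewalAt t ω := by
    intro t h1 h2 hren
    have := hren n h2
    omega
  intro t ht
  rcases Nat.eq_zero_or_pos t with rfl | hpos
  · show Ff x ω = x 0
    unfold Ff
    have hrf : rf ω = 0 := Nat.sInf_eq_zero.mpr (Or.inl hren0)
    rw [hrf]
    rfl
  · show Ff x (shiftOm^[t] ω) = x t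
    unfold Ff
    have hrf : rf (shiftOm^[t] ω) = n - t := by
      apply natSInf_eq
      · show renewalAt (n - t) (shiftOm^[t] ω)
        rw [renewalAt_iterate, show n - t + t = n by omega]
        exact hrenn
      · intro s hs hmem
        have hmem' : renewalAt (s + t) ω := (renewalAt_iterate s t ω).mp hmem
        exact hnotren (s+t) (by omega) (by omega) hmem'
    rw [hrf, Kf_iterate, show n - t + t = n by omega, hK]
    unfold psix
    rw [if_neg (by omega), show n - (n - t) = t by omega]



/-! ### The geometric series bound -/

lemma sum_Ico_pow_log (t : ℕ) :
    (∑ k ∈ Finset.Ico 2 (2^(t+1)), ((2:ℝ≥0∞)⁻¹)^(4 * Nat.log 2 k)) + 7⁻¹ * (8⁻¹:ℝ≥0∞)^t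
      ≤ 7⁻¹ := by
  induction t with
  | zero => simp
  | succ t ih =>
    have h1 : (2:ℕ) ≤ 2^(t+1) := by
      calc (2:ℕ) = 2^1 := by norm_num
        _ ≤ 2^(t+1) := Nat.pow_le_pow_right (by norm_num) (by omega)
    have h2 : (2:ℕ)^(t+1) ≤ 2^(t+2) := Nat.pow_le_pow_right (by norm_num) (by omega)
    rw [← Finset.sum_Ico_consecutive _ h1 h2]
    have hconst : ∀ k ∈ Finset.Ico (2^(t+1)) (2^(t+2)),
        ((2:ℝ≥0∞)⁻¹)^(4 * Nat.log 2 k) = ((2:ℝ≥0∞)⁻¹)^(4 * (t+1)) := by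
      intro k hk
      obtain ⟨hk1, hk2⟩ := Finset.mem_Ico.mp hk
      rw [Nat.log_eq_of_pow_le_of_lt_pow hk1 hk2]
    rw [Finset.sum_congr rfl hconst, Finset.sum_const, Nat.card_Ico]
    have hcard : (2:ℕ)^(t+2) - 2^(t+1) = 2^(t+1) := by
      have : (2:ℕ)^(t+2) = 2^(t+1) + 2^(t+1) := by rw [pow_succ]; ring
      omega
    rw [hcard]
    have hblock : (2^(t+1) : ℕ) • ((2:ℝ≥0∞)⁻¹)^(4 * (t+1)) = (8⁻¹:ℝ≥0∞)^(t+1) := by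
      rw [nsmul_eq_mul, Nat.cast_pow, Nat.cast_ofNat, pow_mul, ← mul_pow]
      congr 1
      rw [show ((2:ℝ≥0∞)⁻¹)^4 = 16⁻¹ by rw [← ENNReal.inv_pow]; norm_num,
        show (16:ℝ≥0∞) = 2 * 8 by norm_num,
        ENNReal.mul_inv (Or.inl (by norm_num)) (Or.inl (by norm_num)),
        ← mul_assoc, ENNReal.mul_inv_cancel (by norm_num) (by norm_num), one_mul]
    rw [hblock]
    have harith : (8⁻¹:ℝ≥0∞)^(t+1) + 7⁻¹ * (8⁻¹:ℝ≥0∞)^(t+1) = 7⁻¹ * (8⁻¹:ℝ≥0∞)^t := by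
      have e1 : (8⁻¹:ℝ≥0∞)^(t+1) + 7⁻¹ * (8⁻¹:ℝ≥0∞)^(t+1)
          = (1 + 7⁻¹) * (8⁻¹:ℝ≥0∞)^(t+1) := by ring
      have e2 : (1 + 7⁻¹ : ℝ≥0∞) = 8 * 7⁻¹ := by
        have h7 : (7:ℝ≥0∞) * 7⁻¹ = 1 := ENNReal.mul_inv_cancel (by norm_num) (by norm_num)
        calc (1 + 7⁻¹ : ℝ≥0∞) = 7 * 7⁻¹ + 1 * 7⁻¹ := by rw [h7, one_mul]
          _ = 8 * 7⁻¹ := by rw [← add_mul]; norm_num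
      have e3 : (8:ℝ≥0∞) * 7⁻¹ * (8⁻¹:ℝ≥0∞)^(t+1) = 7⁻¹ * (8⁻¹:ℝ≥0∞)^t := by
        rw [pow_succ]
        have h8 : (8:ℝ≥0∞) * ((8⁻¹:ℝ≥0∞)^t * 8⁻¹) = (8⁻¹:ℝ≥0∞)^t * (8 * 8⁻¹) := by ring
        rw [mul_assoc 8 7⁻¹, mul_comm (7⁻¹:ℝ≥0∞), mul_assoc, mul_comm ((8⁻¹:ℝ≥0∞))]
        rw [show (8:ℝ≥0∞) * ((8⁻¹:ℝ≥0∞)^t * (7⁻¹ * 8⁻¹)) = ((8:ℝ≥0∞) * 8⁻¹) * ((8⁻¹:ℝ≥0∞)^t * 7⁻¹) by ring,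
          ENNReal.mul_inv_cancel (by norm_num) (by norm_num), one_mul, mul_comm]
      rw [e1, e2, e3]
    rw [add_assoc, harith]
    exact ih

lemma tsum_bad_le : (∑' m : ℕ, ((2:ℝ≥0∞)⁻¹)^(4 * Nat.log 2 (m+2))) ≤ 7⁻¹ := by
  rw [ENNReal.tsum_eq_iSup_sum]
  apply iSup_le
  intro s
  obtain ⟨N, hN⟩ := s.exists_nat_subset_range
  calc ∑ m ∈ s, ((2:ℝ≥0∞)⁻¹)^(4 * Nat.log 2 (m+2))
      ≤ ∑ m ∈ Finset.range N, ((2:ℝ≥0∞)⁻¹)^(4 * Nat.log 2 (m+2)) :=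
        Finset.sum_le_sum_of_subset hN
    _ = ∑ k ∈ Finset.Ico 2 (N+2), ((2:ℝ≥0∞)⁻¹)^(4 * Nat.log 2 k) := by
        rw [Finset.sum_Ico_eq_sum_range]
        have : N + 2 - 2 = N := by omega
        rw [this]
        exact Finset.sum_congr rfl fun m _ => by rw [Nat.add_comm 2 m]
    _ ≤ ∑ k ∈ Finset.Ico 2 (2^(N+1)), ((2:ℝ≥0∞)⁻¹)^(4 * Nat.log 2 k) := by
        apply Finset.sum_le_sum_of_subset
        apply Finset.Ico_subset_Ico le_rfl
        have := Nat.lt_two_pow_self (n := N+1)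
        omega
    _ ≤ 7⁻¹ := le_trans (le_add_right le_rfl) (sum_Ico_pow_log N)

/-! ### Lower bound for the good event -/

lemma DT_block (n : ℕ) : ∀ j ∈ DT n, (Nat.unpair j).1 = n := by
  intro j hj
  rcases Finset.mem_union.mp hj with h | h
  · obtain ⟨i, _, rfl⟩ := Finset.mem_image.mp h
    rw [Nat.unpair_pair]
  · obtain ⟨i, _, rfl⟩ := Finset.mem_image.mp h
    rw [Nat.unpair_pair]

lemma badT_block (u l : ℕ) : ∀ j ∈ badT u l, (Nat.unpair j).1 = u := by
  intro j hj
  obtain ⟨i, _, rfl⟩ := Finset.mem_image.mp hj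
  rw [Nat.unpair_pair]

lemma Dpat_inter_badPat (n u l : ℕ) (hu : u ≠ n) :
    Bm (Dpat n ∩ badPat u l) = Bm (Dpat n) * Bm (badPat u l) := by
  have hdisj : Disjoint (DT n) (badT u l) := by
    rw [Finset.disjoint_left]
    intro k hk hk'
    have h1 := DT_block n k hk
    have h2 := badT_block u l k hk'
    rw [h1] at h2
    exact hu h2.symm
  unfold Dpat badPat
  rw [pat_inter_of_disjoint hdisj, pat_prob, pat_prob, pat_prob,
    Finset.card_union_of_disjoint hdisj, pow_add]

lemma good_prob {n : ℕ} (hn : 1 ≤ n) :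
    ((2:ℝ≥0∞)⁻¹)^(5 * Nat.log 2 n + 5) ≤ Bm (Good n) := by
  set U : Set Om := (⋃ m, LB n m) ∪ (⋃ m, RB n m) with hU
  have hDf : Bm (Dpat n) ≠ ∞ := measure_ne_top _ _
  -- bound the bad part
  have hLB : ∀ m, Bm (Dpat n ∩ LB n m) ≤ Bm (Dpat n) * ((2:ℝ≥0∞)⁻¹)^(4 * Nat.log 2 (m+2)) := by
    intro m
    unfold LB
    split_ifs with h
    · rw [Dpat_inter_badPat n (m+1) _ (by omega), badPat_prob]
    · simp
  have hRB : ∀ m, Bm (Dpat n ∩ RB n m) ≤ Bm (Dpat n) * ((2:ℝ≥0∞)⁻¹)^(4 * Nat.log 2 (m+2)) := by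
    intro m
    unfold RB
    rw [Dpat_inter_badPat n (n+m+1) _ (by omega), badPat_prob]
  have hbad : Bm (Dpat n ∩ U) ≤ 2 * 7⁻¹ * Bm (Dpat n) := by
    rw [hU, Set.inter_union_distrib_left]
    calc Bm ((Dpat n ∩ ⋃ m, LB n m) ∪ (Dpat n ∩ ⋃ m, RB n m))
        ≤ Bm (Dpat n ∩ ⋃ m, LB n m) + Bm (Dpat n ∩ ⋃ m, RB n m) := measure_union_le _ _
      _ ≤ (∑' m, Bm (Dpat n ∩ LB n m)) + (∑' m, Bm (Dpat n ∩ RB n m)) := by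
          apply add_le_add
          · rw [Set.inter_iUnion]; exact measure_iUnion_le _
          · rw [Set.inter_iUnion]; exact measure_iUnion_le _
      _ ≤ (∑' m, Bm (Dpat n) * ((2:ℝ≥0∞)⁻¹)^(4 * Nat.log 2 (m+2)))
          + (∑' m, Bm (Dpat n) * ((2:ℝ≥0∞)⁻¹)^(4 * Nat.log 2 (m+2))) :=
          add_le_add (ENNReal.tsum_le_tsum hLB) (ENNReal.tsum_le_tsum hRB)
      _ = 2 * (Bm (Dpat n) * ∑' m, ((2:ℝ≥0∞)⁻¹)^(4 * Nat.log 2 (m+2))) := by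
          rw [ENNReal.tsum_mul_left, two_mul]
      _ ≤ 2 * (Bm (Dpat n) * 7⁻¹) := by
          apply mul_le_mul_right
          exact mul_le_mul_right tsum_bad_le _
      _ = 2 * 7⁻¹ * Bm (Dpat n) := by ring
  have hsplit : Bm (Dpat n) ≤ Bm (Good n) + 2 * 7⁻¹ * Bm (Dpat n) := by
    calc Bm (Dpat n) = Bm ((Dpat n \ U) ∪ (Dpat n ∩ U)) := by rw [Set.diff_union_inter]
      _ ≤ Bm (Dpat n \ U) + Bm (Dpat n ∩ U) := measure_union_le _ _
      _ ≤ Bm (Good n) + 2 * 7⁻¹ * Bm (Dpat n) := add_le_add le_rfl hbad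
  have hone : (5 * 7⁻¹ : ℝ≥0∞) + 2 * 7⁻¹ = 1 := by
    rw [← add_mul]
    norm_num
    exact ENNReal.mul_inv_cancel (by norm_num) (by norm_num)
  have hcancel : 5 * 7⁻¹ * Bm (Dpat n) ≤ Bm (Good n) := by
    have h1 : 5 * 7⁻¹ * Bm (Dpat n) + 2 * 7⁻¹ * Bm (Dpat n)
        ≤ Bm (Good n) + 2 * 7⁻¹ * Bm (Dpat n) := by
      calc 5 * 7⁻¹ * Bm (Dpat n) + 2 * 7⁻¹ * Bm (Dpat n)
          = (5 * 7⁻¹ + 2 * 7⁻¹) * Bm (Dpat n) := by ring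
        _ = Bm (Dpat n) := by rw [hone, one_mul]
        _ ≤ Bm (Good n) + 2 * 7⁻¹ * Bm (Dpat n) := hsplit
    have hfin : 2 * 7⁻¹ * Bm (Dpat n) ≠ ∞ := by
      apply ENNReal.mul_ne_top
      · apply ENNReal.mul_ne_top (by norm_num)
        simp [ENNReal.inv_ne_top]
      · exact hDf
    exact (ENNReal.add_le_add_iff_right hfin).mp h1
  calc ((2:ℝ≥0∞)⁻¹)^(5 * Nat.log 2 n + 5)
      = 2⁻¹ * ((2:ℝ≥0∞)⁻¹)^(5 * Nat.log 2 n + 4) := by rw [pow_succ, mul_comm]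
    _ ≤ 5 * 7⁻¹ * ((2:ℝ≥0∞)⁻¹)^(5 * Nat.log 2 n + 4) := by
        apply mul_le_mul_left
        have hdiv : (5 : ℝ≥0∞) * 7⁻¹ = 5 / 7 := by rw [ENNReal.div_eq_inv_mul, mul_comm]
        rw [hdiv, ENNReal.le_div_iff_mul_le (Or.inl (by norm_num)) (Or.inl (by norm_num))]
        calc (2:ℝ≥0∞)⁻¹ * 7 ≤ (2:ℝ≥0∞)⁻¹ * 8 := by
              apply mul_le_mul_right
              norm_num
          _ = 4 := by
              rw [show (8:ℝ≥0∞) = 2 * 4 by norm_num, ← mul_assoc,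
                ENNReal.inv_mul_cancel (by norm_num) (by norm_num), one_mul]
          _ ≤ 5 := by norm_num
    _ = 5 * 7⁻¹ * Bm (Dpat n) := by rw [Dpat_prob]
    _ ≤ Bm (Good n) := hcancel


/-! ### Measurability of the replay map -/

lemma measurable_natInf {P : ℕ → Om → Prop} (hP : ∀ t, MeasurableSet {ω | P t ω}) :
    Measurable fun ω => sInf {t | P t ω} := by
  apply measurable_to_countable'
  intro k
  rcases Nat.eq_zero_or_pos k with rfl | hk
  · have hset : (fun ω => sInf {t | P t ω}) ⁻¹' {0}
        = {ω | P 0 ω} ∪ ⋂ t, {ω | ¬ P t ω} := by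
      ext ω
      simp only [Set.mem_preimage, Set.mem_singleton_iff, Set.mem_union, Set.mem_iInter,
        Set.mem_setOf_eq]
      rw [Nat.sInf_eq_zero]
      constructor
      · rintro (h | h)
        · exact Or.inl h
        · right
          intro t
          exact Set.eq_empty_iff_forall_notMem.mp h t
      · rintro (h | h)
        · exact Or.inl h
        · right
          exact Set.eq_empty_iff_forall_notMem.mpr h
    rw [hset]
    exact (hP 0).union (MeasurableSet.iInter fun t => (hP t).compl)
  · have hset : (fun ω => sInf {t | P t ω}) ⁻¹' {k}
        = {ω | P k ω} ∩ ⋂ j ∈ Finset.range k, {ω | ¬ P j ω} := by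
      ext ω
      simp only [Set.mem_preimage, Set.mem_singleton_iff, Set.mem_inter_iff, Set.mem_iInter,
        Set.mem_setOf_eq, Finset.mem_range]
      constructor
      · intro hinf
        have hne : {t | P t ω}.Nonempty := by
          by_contra hemp
          rw [Set.not_nonempty_iff_eq_empty] at hemp
          rw [hemp, Nat.sInf_empty] at hinf
          omega
        have hmem := Nat.sInf_mem hne
        rw [hinf] at hmem
        refine ⟨hmem, fun j hj hPj => ?_⟩
        have := Nat.sInf_le (show j ∈ {t | P t ω} from hPj)
        omega
      · rintro ⟨hPk, hlt⟩
        exact natSInf_eq hPk (fun s hs hmem => hlt s hs hmem)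
    rw [hset]
    exact (hP k).inter (MeasurableSet.biInter (Finset.range k).countable_toSet
      fun j _ => (hP j).compl)

lemma measurable_bind_nat {β : Type} [MeasurableSpace β] [MeasurableSingletonClass β]
    [Countable β] {g : Om → ℕ} {h : ℕ → Om → β} (hg : Measurable g)
    (hh : ∀ k, Measurable (h k)) : Measurable fun ω => h (g ω) ω := by
  apply measurable_to_countable'
  intro b
  have hset : (fun ω => h (g ω) ω) ⁻¹' {b} = ⋃ k, (g ⁻¹' {k} ∩ (h k) ⁻¹' {b}) := by
    ext ω
    simp only [Set.mem_preimage, Set.mem_singleton_iff, Set.mem_iUnion, Set.mem_inter_iff]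
    constructor
    · intro hb
      exact ⟨g ω, rfl, hb⟩
    · rintro ⟨k, hk, hb⟩
      subst hk
      exact hb
  rw [hset]
  exact MeasurableSet.iUnion fun k =>
    (hg (measurableSet_singleton k)).inter ((hh k) (measurableSet_singleton b))

lemma measurable_bitf (u i : ℕ) : Measurable (bitf u i) := measurable_pi_apply _

lemma measurableSet_quadBad (u g : ℕ) : MeasurableSet {ω : Om | quadBad u g ω} := by
  have hset : {ω : Om | quadBad u g ω}
      = ⋃ i ∈ Finset.range 4, {ω | bitf u (4*g+i) ω ≠ 1} := by
    ext ω
    simp [quadBad]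
  rw [hset]
  exact MeasurableSet.biUnion (Finset.range 4).countable_toSet fun i _ =>
    (measurableSet_eq_fun (measurable_bitf u (4*g+i)) measurable_const).compl

lemma measurable_Gf (u : ℕ) : Measurable (Gf u) := measurable_natInf (measurableSet_quadBad u)

lemma measurable_Kf (u : ℕ) : Measurable (Kf u) := by
  have hrepr : Kf u = fun ω =>
      (fun k ω' => 2^k + ∑ i ∈ Finset.range k,
        if bitf u (4*(k + 1) + i) ω' = 1 then 2^i else 0) (Gf u ω) ω := rfl
  rw [hrepr]
  exact measurable_bind_nat (h := fun k ω' => 2^k + ∑ i ∈ Finset.range k,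
      if bitf u (4*(k + 1) + i) ω' = 1 then 2^i else 0)
    (measurable_Gf u)
    (fun k => Measurable.add measurable_const
      (Finset.measurable_sum _ fun i _ => Measurable.ite
        (measurableSet_eq_fun (measurable_bitf u (4*(k+1)+i)) measurable_const)
        measurable_const measurable_const))

lemma measurableSet_renewalAt (t : ℕ) : MeasurableSet {ω : Om | renewalAt t ω} := by
  have hset : {ω : Om | renewalAt t ω} = ⋂ u, {ω | t < u → Kf u ω + t ≤ u} := by
    ext ω; simp [renewalAt]
  rw [hset]
  apply MeasurableSet.iInter
  intro u
  by_cases h : t < u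
  · have : {ω : Om | t < u → Kf u ω + t ≤ u} = (Kf u) ⁻¹' {m | m + t ≤ u} := by
      ext ω; simp [h]
    rw [this]
    exact (measurable_Kf u) (by trivial)
  · have : {ω : Om | t < u → Kf u ω + t ≤ u} = Set.univ := by
      ext ω; simp [h]
    rw [this]
    exact MeasurableSet.univ

lemma measurable_rf : Measurable rf := measurable_natInf measurableSet_renewalAt

lemma measurable_Ff (x : ℕ → Bool) : Measurable (Ff x) := by
  have hrepr : Ff x = fun ω => (fun k ω' => psix x k (Kf k ω')) (rf ω) ω := rfl
  rw [hrepr]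
  exact measurable_bind_nat (h := fun k ω' => psix x k (Kf k ω')) measurable_rf
    (fun k => measurable_to_countable' fun b =>
      (measurable_Kf k) (show MeasurableSet ((fun m => psix x k m) ⁻¹' {b}) from by trivial))

lemma measurable_Phi (x : ℕ → Bool) : Measurable (Phi x) :=
  measurable_pi_lambda _ fun t => (measurable_Ff x).comp (measurable_shiftOm.iterate t)

/-! ### The stationary ergodic measure -/

lemma measurable_shift : Measurable shift :=
  measurable_pi_lambda _ fun t => measurable_pi_apply (t+1)

noncomputable def nux (x : ℕ → Bool) : Measure (ℕ → Bool) := Measure.map (Phi x) Bm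

lemma nux_prob (x : ℕ → Bool) : IsProbabilityMeasure (nux x) :=
  Measure.isProbabilityMeasure_map (measurable_Phi x).aemeasurable

lemma shift_comp_Phi (x : ℕ → Bool) : shift ∘ Phi x = Phi x ∘ shiftOm :=
  funext fun ω => (Phi_shiftOm x ω).symm

lemma measurePreserving_nux (x : ℕ → Bool) : MeasurePreserving shift (nux x) (nux x) := by
  constructor
  · exact measurable_shift
  · rw [nux, Measure.map_map measurable_shift (measurable_Phi x), shift_comp_Phi,
      ← Measure.map_map (measurable_Phi x) measurable_shiftOm, map_shiftOm_Bm]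

lemma ergodic_nux (x : ℕ → Bool) : Ergodic shift (nux x) := by
  have hprob := nux_prob x
  refine ⟨measurePreserving_nux x, ⟨fun s hs hinv => ?_⟩⟩
  have hA : MeasurableSet (Phi x ⁻¹' s) := measurable_Phi x hs
  have hAinv : shiftOm ⁻¹' (Phi x ⁻¹' s) = Phi x ⁻¹' s := by
    rw [← Set.preimage_comp, ← shift_comp_Phi, Set.preimage_comp, hinv]
  rw [Filter.eventuallyConst_set']
  rcases tail_zero_one hA hAinv with h0 | h1
  · left
    rw [MeasureTheory.ae_eq_empty, nux, Measure.map_apply (measurable_Phi x) hs]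
    exact h0
  · right
    rw [MeasureTheory.ae_eq_univ]
    have hcompl : nux x sᶜ = Bm ((Phi x ⁻¹' s)ᶜ) := by
      rw [nux, Measure.map_apply (measurable_Phi x) hs.compl, Set.preimage_compl]
    rw [hcompl, prob_compl_eq_zero_iff hA]
    exact h1

lemma nux_cyl_ge (x : ℕ → Bool) {n : ℕ} (hn : 1 ≤ n) :
    ((2:ℝ≥0∞)⁻¹)^(5 * Nat.log 2 n + 5)
      ≤ nux x (cylSet (List.ofFn fun i : Fin n => x i)) := by
  rw [nux, Measure.map_apply (measurable_Phi x) (measurableSet_cylSet _)]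
  refine le_trans (good_prob hn) (measure_mono ?_)
  intro ω hω
  exact mem_cylSet_ofFn_iff.mpr fun i => phi_eq_on_good x hn hω i i.2


/-! ### `d(δ_x, ν_x) = 0` -/

lemma dn_dirac_nux_repr (x : ℕ → Bool) {n : ℕ} (hn : 1 ≤ n) :
    ∃ r : ℝ, dn (Measure.dirac x) (nux x) n = (r : EReal) ∧ 0 ≤ r
      ∧ r ≤ ((5 * Nat.log 2 n + 5 : ℕ) : ℝ) := by
  have hprob := nux_prob x
  rw [dn_dirac]
  set w := List.ofFn fun i : Fin n => x i with hw
  have h1 : cyl (Measure.dirac x) w = 1 := cyl_dirac_self x n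
  have hcylge : ((2:ℝ)⁻¹)^(5 * Nat.log 2 n + 5) ≤ cyl (nux x) w := by
    rw [cyl_def]
    have hle := nux_cyl_ge x hn
    calc ((2:ℝ)⁻¹)^(5 * Nat.log 2 n + 5)
        = (((2:ℝ≥0∞)⁻¹)^(5 * Nat.log 2 n + 5)).toReal := by
          rw [ENNReal.toReal_pow, ENNReal.toReal_inv]
          norm_num
      _ ≤ (nux x (cylSet w)).toReal := ENNReal.toReal_mono (measure_ne_top _ _) hle
  have hpow_pos : (0:ℝ) < ((2:ℝ)⁻¹)^(5 * Nat.log 2 n + 5) := by positivity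
  have hcylpos : 0 < cyl (nux x) w := lt_of_lt_of_le hpow_pos hcylge
  have hcyle1 : cyl (nux x) w ≤ 1 := cyl_le_one _ _
  unfold klTerm
  rw [h1, if_neg one_ne_zero, if_neg (ne_of_gt hcylpos)]
  refine ⟨1 * Real.logb 2 (1 / cyl (nux x) w), rfl, ?_, ?_⟩
  · rw [one_mul]
    apply Real.logb_nonneg (by norm_num)
    exact one_le_one_div hcylpos hcyle1
  · rw [one_mul]
    have hub : 1 / cyl (nux x) w ≤ (2:ℝ)^(5 * Nat.log 2 n + 5) := by
      have h2 := one_div_le_one_div_of_le hpow_pos hcylge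
      calc 1 / cyl (nux x) w ≤ 1 / ((2:ℝ)⁻¹)^(5 * Nat.log 2 n + 5) := h2
        _ = (2:ℝ)^(5 * Nat.log 2 n + 5) := by
            rw [one_div, ← inv_pow, inv_inv]
    calc Real.logb 2 (1 / cyl (nux x) w)
        ≤ Real.logb 2 ((2:ℝ)^(5 * Nat.log 2 n + 5)) := by
          rw [Real.logb_le_logb (by norm_num) (by positivity) (by positivity)]
          exact hub
      _ = ((5 * Nat.log 2 n + 5 : ℕ) : ℝ) := by
          rw [Real.logb_pow, Real.logb_self_eq_one (by norm_num)]
          push_cast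
          ring

lemma tendsto_log_bound :
    Tendsto (fun n : ℕ => (n:ℝ)⁻¹ * ((5 * Nat.log 2 n + 5 : ℕ) : ℝ)) atTop (nhds 0) := by
  have hlog : Tendsto (fun n : ℕ => Real.log (n:ℝ) / (n:ℝ)) atTop (nhds 0) :=
    (Real.isLittleO_log_id_atTop.tendsto_div_nhds_zero).comp tendsto_natCast_atTop_atTop
  have hinv : Tendsto (fun n : ℕ => (n:ℝ)⁻¹) atTop (nhds 0) :=
    tendsto_inv_atTop_nhds_zero_nat
  have hg : Tendsto (fun n : ℕ =>
      (5 / Real.log 2) * (Real.log (n:ℝ) / (n:ℝ)) + 5 * (n:ℝ)⁻¹) atTop (nhds 0) := by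
    have := (hlog.const_mul (5 / Real.log 2)).add (hinv.const_mul 5)
    simpa using this
  apply squeeze_zero (fun n => ?_) (fun n => ?_) hg
  · positivity
  · rcases Nat.eq_zero_or_pos n with rfl | hn
    · simp
    · have hnpos : (0:ℝ) < (n:ℝ) := by exact_mod_cast hn
      have hlog2 : (0:ℝ) < Real.log 2 := Real.log_pos (by norm_num)
      have hL : ((Nat.log 2 n : ℕ) : ℝ) * Real.log 2 ≤ Real.log (n:ℝ) := by
        have hpow : ((2:ℝ))^(Nat.log 2 n) ≤ (n:ℝ) := by
          exact_mod_cast Nat.pow_log_le_self 2 (by omega)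
        calc ((Nat.log 2 n : ℕ) : ℝ) * Real.log 2 = Real.log ((2:ℝ)^(Nat.log 2 n)) := by
              rw [Real.log_pow]
          _ ≤ Real.log (n:ℝ) := Real.log_le_log (by positivity) hpow
      have hL' : ((Nat.log 2 n : ℕ):ℝ) ≤ Real.log (n:ℝ) / Real.log 2 := by
        rw [le_div_iff₀ hlog2]
        exact hL
      push_cast
      have key : (n:ℝ)⁻¹ * (5 * ((Nat.log 2 n : ℕ):ℝ) + 5)
          = 5 * ((Nat.log 2 n : ℕ):ℝ) * (n:ℝ)⁻¹ + 5 * (n:ℝ)⁻¹ := by ring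
      rw [key]
      apply add_le_add _ le_rfl
      calc 5 * ((Nat.log 2 n : ℕ):ℝ) * (n:ℝ)⁻¹
          ≤ 5 * (Real.log (n:ℝ) / Real.log 2) * (n:ℝ)⁻¹ := by
            apply mul_le_mul_of_nonneg_right _ (by positivity)
            nlinarith [hL']
        _ = 5 / Real.log 2 * (Real.log (n:ℝ) / (n:ℝ)) := by
            field_simp

lemma dKL_dirac_nux (x : ℕ → Bool) : dKL (Measure.dirac x) (nux x) = 0 := by
  apply le_antisymm
  · have hle : ∀ᶠ n : ℕ in atTop,
        ((((n : ℝ))⁻¹ : ℝ) : EReal) * dn (Measure.dirac x) (nux x) n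
          ≤ (((n:ℝ)⁻¹ * ((5 * Nat.log 2 n + 5 : ℕ) : ℝ) : ℝ) : EReal) := by
      filter_upwards [eventually_ge_atTop 1] with n hn
      obtain ⟨r, hr, hr0, hrle⟩ := dn_dirac_nux_repr x hn
      rw [hr, ← EReal.coe_mul]
      apply EReal.coe_le_coe_iff.mpr
      apply mul_le_mul_of_nonneg_left hrle
      positivity
    calc dKL (Measure.dirac x) (nux x)
        ≤ liminf (fun n : ℕ =>
            (((n:ℝ)⁻¹ * ((5 * Nat.log 2 n + 5 : ℕ) : ℝ) : ℝ) : EReal)) atTop :=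
          liminf_le_liminf hle
      _ = 0 := by
          apply Filter.Tendsto.liminf_eq
          rw [show (0 : EReal) = ((0:ℝ) : EReal) from rfl]
          exact (EReal.tendsto_coe).mpr tendsto_log_bound
  · apply le_liminf_of_le (by isBoundedDefault)
    filter_upwards [eventually_ge_atTop 1] with n hn
    obtain ⟨r, hr, hr0, _⟩ := dn_dirac_nux_repr x hn
    rw [hr, ← EReal.coe_mul]
    apply EReal.coe_nonneg.mpr
    positivity

end Stmt13

/-- Main theorem: for every time-series distribution `ρ` on
`{0,1}^∞` there is a measure `μ ∈ S⁺` (i.e. `d(μ, ν) = 0` for some stationary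
ergodic `ν`) such that `d(μ, ρ) ≥ 1`; hence no predictor is universally
consistent on `S⁺`. -/
theorem stmt13 (ρ : Measure (ℕ → Bool)) [IsProbabilityMeasure ρ] :
    ∃ μ : Measure (ℕ → Bool), IsProbabilityMeasure μ ∧
      (∃ ν : Measure (ℕ → Bool), IsProbabilityMeasure ν ∧
        MeasurePreserving shift ν ν ∧ Ergodic shift ν ∧ dKL μ ν = 0) ∧
      1 ≤ dKL μ ρ := by
  refine ⟨Measure.dirac (Stmt13.adv ρ), inferInstance,
    ⟨Stmt13.nux (Stmt13.adv ρ), Stmt13.nux_prob _, Stmt13.measurePreserving_nux _,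
      Stmt13.ergodic_nux _, Stmt13.dKL_dirac_nux _⟩,
    Stmt13.dKL_dirac_adv_ge_one ρ⟩
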